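/- If a family T of binary vectors of length t contains more than 1 + (k+d-1)·2^d·C(t,d) + Σ_{i=0}^{d-1} C(t,i) distinct vectors, then there exists a set I of d coordinates such that every function from I to {0,1} arises as the projection onto I of at least k+d distinct vectors of T. -/

import Mathlib

/-- If a family `T` of binary vectors of length `t` contains more than
`1 + (k+d-1)·2^d·C(t,d) + Σ_{i<d} C(t,i)` distinct vectors, then there is a set `I`
of `d` coordinates such that every function `g` arises as the projection onto `I`
of at least `k+d` distinct vectors of `T`. -/
theorem stmt_0 (t k d : ℕ) (T : Finset (Fin t → Bool))
    (hT : 1 + (k + d - 1) * 2 ^ d * t.choose d + ∑ i ∈ Finset.range d, t.choose i < T.card) :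
    ∃ I : Finset (Fin t), I.card = d ∧
      ∀ g : Fin t → Bool, k + d ≤ (T.filter (fun v => ∀ i ∈ I, v i = g i)).card := by
  classical
  rcases Nat.eq_zero_or_pos d with hd | hd
  · subst hd
    refine ⟨∅, by simp, fun g => ?_⟩
    rw [Finset.filter_true_of_mem (fun v _ => by simp)]
    simp only [Finset.range_zero, Finset.sum_empty, pow_zero, Nat.choose_zero_right] at hT
    omega
  by_contra hc
  push_neg at hc
  choose! g hg using hc
  set P := Finset.powersetCard d (Finset.univ : Finset (Fin t)) with hP
  set R := P.biUnion (fun I => T.filter (fun v => ∀ i ∈ I, v i = g I i)) with hR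
  set T' := T \ R with hT'def
  have hRcard : R.card ≤ t.choose d * (k + d - 1) := by
    calc R.card ≤ ∑ I ∈ P, (T.filter (fun v => ∀ i ∈ I, v i = g I i)).card :=
          Finset.card_biUnion_le
      _ ≤ ∑ _I ∈ P, (k + d - 1) := by
          refine Finset.sum_le_sum (fun I hI => ?_)
          have hIcard : I.card = d := (Finset.mem_powersetCard.mp hI).2
          exact Nat.le_pred_of_lt (hg I hIcard)
      _ = t.choose d * (k + d - 1) := by
          have hPcard : P.card = t.choose d := by
            simp [hP, Finset.card_powersetCard]
          rw [Finset.sum_const, smul_eq_mul, hPcard]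
  -- embed vectors as finsets
  set e : (Fin t → Bool) → Finset (Fin t) :=
    fun v => Finset.univ.filter (fun i => v i = true) with he_def
  have he : Function.Injective e := by
    intro v w hvw
    funext i
    have h := Finset.ext_iff.mp hvw i
    simp only [he_def, Finset.mem_filter, Finset.mem_univ, true_and] at h
    cases hvi : v i <;> cases hwi : w i <;> simp_all
  set A := T'.image e with hA
  have hAcard : T'.card = A.card := (Finset.card_image_of_injective _ he).symm
  have hnots : ∀ s ∈ A.shatterer, s.card < d := by
    intro s hs
    by_contra hsd
    push_neg at hsd
    obtain ⟨I, hIs, hIcard⟩ := Finset.exists_subset_card_eq hsd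
    have hsh : A.Shatters I := (Finset.mem_shatterer.mp hs).mono_right hIs
    obtain ⟨u, hu, huI⟩ := hsh (Finset.filter_subset (fun i => g I i = true) I)
    obtain ⟨v, hv, rfl⟩ := Finset.mem_image.mp hu
    have hvT : v ∈ T := (Finset.mem_sdiff.mp hv).1
    have hagree : ∀ i ∈ I, v i = g I i := by
      intro i hiI
      have h1 := Finset.ext_iff.mp huI i
      simp only [Finset.mem_inter, Finset.mem_filter, he_def, Finset.mem_univ, true_and,
        hiI, and_true, true_and] at h1
      cases hvi : v i <;> cases hgi : g I i <;> simp_all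
    have hvR : v ∈ R := by
      refine Finset.mem_biUnion.mpr ⟨I, ?_, Finset.mem_filter.mpr ⟨hvT, hagree⟩⟩
      exact Finset.mem_powersetCard.mpr ⟨Finset.subset_univ _, hIcard⟩
    exact (Finset.mem_sdiff.mp hv).2 hvR
  have hT'card : T'.card ≤ ∑ i ∈ Finset.range d, t.choose i := by
    have h1 : A.card ≤ A.shatterer.card := Finset.card_le_card_shatterer A
    have h2 : A.shatterer ⊆
        (Finset.range d).biUnion (fun i => Finset.powersetCard i Finset.univ) := by
      intro s hs
      exact Finset.mem_biUnion.mpr ⟨s.card, Finset.mem_range.mpr (hnots s hs),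
        Finset.mem_powersetCard.mpr ⟨Finset.subset_univ _, rfl⟩⟩
    calc T'.card = A.card := hAcard
      _ ≤ A.shatterer.card := h1
      _ ≤ ((Finset.range d).biUnion (fun i => Finset.powersetCard i Finset.univ)).card :=
          Finset.card_le_card h2
      _ ≤ ∑ i ∈ Finset.range d, (Finset.powersetCard i (Finset.univ : Finset (Fin t))).card :=
          Finset.card_biUnion_le
      _ = ∑ i ∈ Finset.range d, t.choose i := by
          simp [Finset.card_powersetCard]
  have hsplit : T.card ≤ R.card + T'.card := by
    have hsub : T ⊆ R ∪ T' := by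
      intro v hv
      by_cases h : v ∈ R
      · exact Finset.mem_union_left _ h
      · exact Finset.mem_union_right _ (Finset.mem_sdiff.mpr ⟨hv, h⟩)
    calc T.card ≤ (R ∪ T').card := Finset.card_le_card hsub
      _ ≤ R.card + T'.card := Finset.card_union_le _ _
  have hmul : t.choose d * (k + d - 1) ≤ (k + d - 1) * 2 ^ d * t.choose d := by
    have h2d : 1 ≤ 2 ^ d := Nat.one_le_two_pow
    calc t.choose d * (k + d - 1) = (k + d - 1) * 1 * t.choose d := by ring
      _ ≤ (k + d - 1) * 2 ^ d * t.choose d :=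
          Nat.mul_le_mul_right _ (Nat.mul_le_mul_left _ h2d)
  omega
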